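/- For all natural numbers n ≥ 1 and integers j ≥ 0, the identity 2·∑_{k≥j} 3^k (k+1) [C(3n−k−1, n−k−2) − 2·C(3n−k−2, n−k−3)] = 3^j (n+j) C(3n−j−1, n−j−2) holds, where C denotes the binomial coefficient and terms with negative lower index are zero. -/

import Mathlib

/-- Binomial coefficient `C(a, b)` for integers, with the convention that it is
zero when `b < 0` or `b > a`. -/
def intChoose (a b : ℤ) : ℤ :=
  if 0 ≤ b then (a.toNat.choose b.toNat : ℤ) else 0

lemma intChoose_neg {a b : ℤ} (h : b < 0) : intChoose a b = 0 := by
  simp [intChoose, not_le.mpr h]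

lemma intChoose_nonneg_eq {a b : ℤ} (hb : 0 ≤ b) :
    intChoose a b = (a.toNat.choose b.toNat : ℤ) := by
  simp [intChoose, hb]

/-- Absorption identity. -/
lemma key (n k : ℕ) :
    ((n : ℤ) - k - 2) * intChoose (3 * n - k - 1) (n - k - 2) =
      (3 * (n : ℤ) - k - 1) * intChoose (3 * n - k - 2) (n - k - 3) := by
  rcases lt_trichotomy ((n : ℤ) - k - 2) 0 with h | h | h
  · have hA : intChoose (3 * n - k - 1) (n - k - 2) = 0 := intChoose_neg h
    have hB : intChoose (3 * n - k - 2) (n - k - 3) = 0 :=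
      intChoose_neg (show (n : ℤ) - k - 3 < 0 by omega)
    rw [hA, hB]; ring
  · have hB : intChoose (3 * n - k - 2) (n - k - 3) = 0 :=
      intChoose_neg (show (n : ℤ) - k - 3 < 0 by omega)
    rw [h, hB]; ring
  · have hb : (0:ℤ) ≤ (n : ℤ) - k - 2 := le_of_lt h
    have hk3 : k + 3 ≤ n := by omega
    rw [intChoose_nonneg_eq hb, intChoose_nonneg_eq (by omega : (0:ℤ) ≤ (n:ℤ) - k - 3)]
    have h1 : ((3 * (n : ℤ) - k - 1).toNat) = 3 * n - k - 1 := by omega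
    have h2 : ((n : ℤ) - k - 2).toNat = n - k - 2 := by omega
    have h3 : ((3 * (n : ℤ) - k - 2).toNat) = 3 * n - k - 2 := by omega
    have h4 : ((n : ℤ) - k - 3).toNat = n - k - 3 := by omega
    rw [h1, h2, h3, h4]
    have ha : 3 * n - k - 1 = (3 * n - k - 2) + 1 := by omega
    have hbn : n - k - 2 = (n - k - 3) + 1 := by omega
    have := Nat.add_one_mul_choose_eq (3 * n - k - 2) (n - k - 3)
    -- this : (3*n-k-2+1) * (3*n-k-2).choose (n-k-3) = (3*n-k-2+1).choose (n-k-3+1) * (n-k-3+1)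
    have hcast : ((3 * n - k - 2 + 1 : ℕ) : ℤ) * ((3 * n - k - 2).choose (n - k - 3) : ℤ) =
        (((3 * n - k - 2 + 1).choose (n - k - 3 + 1) : ℕ) : ℤ) * ((n - k - 3 + 1 : ℕ) : ℤ) := by
      exact_mod_cast congrArg (Nat.cast : ℕ → ℤ) this
    rw [ha, hbn]
    have e1 : ((n : ℤ) - k - 2) = ((n - k - 3 + 1 : ℕ) : ℤ) := by omega
    have e2 : (3 * (n : ℤ) - k - 1) = ((3 * n - k - 2 + 1 : ℕ) : ℤ) := by omega
    rw [e1, e2]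
    linarith [hcast]

theorem stmt_0 (n : ℕ) (hn : 1 ≤ n) (j : ℕ) :
    2 * ∑ᶠ k ∈ Set.Ici j, (3 : ℤ) ^ k * (k + 1) *
        (intChoose (3 * n - k - 1) (n - k - 2) -
          2 * intChoose (3 * n - k - 2) (n - k - 3)) =
      3 ^ j * (n + j) * intChoose (3 * n - j - 1) (n - j - 2) := by
  set f : ℕ → ℤ := fun k => (3 : ℤ) ^ k * (k + 1) *
      (intChoose (3 * n - k - 1) (n - k - 2) -
        2 * intChoose (3 * n - k - 2) (n - k - 3)) with hf
  set g : ℕ → ℤ := fun k => 3 ^ k * ((n : ℤ) + k) * intChoose (3 * n - k - 1) (n - k - 2)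
    with hg
  have hgzero : ∀ k, n ≤ k + 1 → g k = 0 := by
    intro k hk
    simp only [hg, intChoose_neg (show (n : ℤ) - k - 2 < 0 by omega), mul_zero]
  have hfzero : ∀ k, n ≤ k + 1 → f k = 0 := by
    intro k hk
    simp only [hf, intChoose_neg (show (n : ℤ) - k - 2 < 0 by omega),
      intChoose_neg (show (n : ℤ) - k - 3 < 0 by omega)]
    ring
  have hstep : ∀ k, 2 * f k = g k - g (k + 1) := by
    intro k
    have h := key n k
    simp only [hf, hg]
    push_cast
    have e1 : 3 * (n : ℤ) - ((k : ℤ) + 1) - 1 = 3 * n - k - 2 := by ring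
    have e2 : (n : ℤ) - ((k : ℤ) + 1) - 2 = (n : ℤ) - k - 3 := by ring
    rw [e1, e2]
    linear_combination (-(3:ℤ)^k) * h
  rcases le_or_gt n j with hnj | hjn
  · rw [finsum_mem_eq_zero_of_forall_eq_zero (fun k hk => hfzero k (by
      simp only [Set.mem_Ici] at hk; omega))]
    rw [show (3:ℤ)^j * ((n:ℤ)+j) * intChoose (3*n-j-1) (n-j-2) = g j from rfl,
      hgzero j (by omega)]
    ring
  · have hsum : ∑ᶠ k ∈ Set.Ici j, f k = ∑ k ∈ Finset.Ico j n, f k := by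
      apply finsum_mem_eq_sum_of_inter_support_eq
      ext k
      simp only [Set.mem_inter_iff, Set.mem_Ici, Function.mem_support, Finset.coe_Ico,
        Set.mem_Ico]
      constructor
      · rintro ⟨h1, h2⟩
        refine ⟨⟨h1, ?_⟩, h2⟩
        by_contra hc
        exact h2 (hfzero k (by omega))
      · rintro ⟨⟨h1, _⟩, h2⟩
        exact ⟨h1, h2⟩
    rw [hsum, Finset.mul_sum]
    have : ∑ k ∈ Finset.Ico j n, 2 * f k = g j - g n := by
      have := Finset.sum_Ico_eq_sum_range (f := fun k => 2 * f k) (m := j) (n := n)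
      rw [this]
      calc ∑ i ∈ Finset.range (n - j), 2 * f (j + i)
          = ∑ i ∈ Finset.range (n - j), (g (j + i) - g (j + (i + 1))) := by
            refine Finset.sum_congr rfl fun i _ => ?_
            rw [hstep, ← Nat.add_assoc]
        _ = g (j + 0) - g (j + (n - j)) :=
            Finset.sum_range_sub' (fun i => g (j + i)) (n - j)
        _ = g j - g n := by rw [add_zero, Nat.add_sub_cancel' (le_of_lt hjn)]
    rw [this, hgzero n (by omega)]
    simp [hg]
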